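/- Let ℰ, ℰ' be i.i.d. standard exponential random variables, and for 0 ≤ t ≤ 1 set ℰ_t = (ℰ−1) − t(ℰ'−1). Then E|ℰ_t| = (2/e)·e^t/(1+t). -/

import Mathlib

open MeasureTheory ProbabilityTheory Real Set Filter Topology
open scoped ENNReal NNReal

/-- Density of a standard exponential random variable. -/
noncomputable def expPDF : ℝ → ℝ := fun x => if 0 < x then Real.exp (-x) else 0

/-- `X` has density `f` with respect to Lebesgue measure. -/
def HasDensity {Ω : Type*} [MeasurableSpace Ω] (P : Measure Ω) (X : Ω → ℝ) (f : ℝ → ℝ) : Prop :=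
  Measurable X ∧ Measure.map X P = volume.withDensity (fun x => ENNReal.ofReal (f x))


lemma hasDerivAt_linexp (a b c x : ℝ) :
    HasDerivAt (fun x => (a*x + b) * Real.exp (c*x)) ((a + c*(a*x+b)) * Real.exp (c*x)) x := by
  have h1 : HasDerivAt (fun x : ℝ => Real.exp (c*x)) (c * Real.exp (c*x)) x := by
    refine ((Real.hasDerivAt_exp (c*x)).comp x ((hasDerivAt_id x).const_mul c)).congr_deriv ?_
    show Real.exp (c * x) * (c * 1) = _; ring
  have h2 : HasDerivAt (fun x : ℝ => a*x + b) a x := by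
    simpa using ((hasDerivAt_id x).const_mul a).add_const b
  exact (h2.mul h1).congr_deriv (by ring)

lemma int_exp (a : ℝ) : IntegrableOn (fun x => Real.exp (-x)) (Ioi a) := by
  simpa using exp_neg_integrableOn_Ioi a one_pos

lemma int_xexp : IntegrableOn (fun x : ℝ => x * Real.exp (-x)) (Ioi 0) := by
  have hderiv : ∀ x ∈ Ici (0:ℝ), HasDerivAt (fun x : ℝ => (-1*x + -1) * Real.exp (-1*x))
      (x * Real.exp (-x)) x := by
    intro x _
    have h := hasDerivAt_linexp (-1) (-1) (-1) x
    have e : (-1 + -1*(-1*x + -1) : ℝ) = x := by ring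
    rw [e] at h
    simpa [neg_one_mul] using h
  have hg : Tendsto (fun x : ℝ => (-1*x + -1) * Real.exp (-1*x)) atTop (𝓝 0) := by
    have h1 : Tendsto (fun x : ℝ => x ^ 1 * Real.exp (-x)) atTop (𝓝 0) :=
      tendsto_pow_mul_exp_neg_atTop_nhds_zero 1
    have h2 : Tendsto (fun x : ℝ => Real.exp (-x)) atTop (𝓝 0) := tendsto_exp_neg_atTop_nhds_zero
    have := (h1.neg.sub h2)
    simpa [neg_one_mul] using this.congr (fun x => by ring)
  exact integrableOn_Ioi_deriv_of_nonneg' hderiv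
    (fun x hx => mul_nonneg (le_of_lt hx) (Real.exp_nonneg _)) hg

lemma int_linexp_Ioi (c : ℝ) (hc : 0 ≤ c) :
    IntegrableOn (fun x => Real.exp (-x) * |x - c|) (Ioi c) := by
  have h : IntegrableOn (fun x => x * Real.exp (-x) - c * Real.exp (-x)) (Ioi c) :=
    (int_xexp.mono_set (Ioi_subset_Ioi hc)).sub ((int_exp c).const_mul c)
  refine h.congr_fun (fun x hx => ?_) measurableSet_Ioi
  rw [abs_of_nonneg (by linarith [mem_Ioi.mp hx] : (0:ℝ) ≤ x - c)]
  ring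

lemma inner_int (c : ℝ) (hc : 0 ≤ c) :
    ∫ x in Ioi (0:ℝ), Real.exp (-x) * |x - c| = c - 1 + 2 * Real.exp (-c) := by
  have hcont : Continuous (fun x : ℝ => Real.exp (-x) * |x - c|) :=
    (Real.continuous_exp.comp continuous_neg).mul (continuous_id.sub continuous_const).abs
  have hint1 : IntegrableOn (fun x => Real.exp (-x) * |x - c|) (Ioc 0 c) :=
    hcont.integrableOn_Ioc
  have hint2 := int_linexp_Ioi c hc
  rw [← Ioc_union_Ioi_eq_Ioi hc,
    setIntegral_union (Ioc_disjoint_Ioi le_rfl) measurableSet_Ioi hint1 hint2]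
  have P1 : ∫ x in Ioc (0:ℝ) c, Real.exp (-x) * |x - c| = Real.exp (-c) - (1 - c) := by
    rw [setIntegral_congr_fun measurableSet_Ioc
      (g := fun x => (c - x) * Real.exp (-x))
      (fun x hx => by rw [abs_of_nonpos (by linarith [hx.2] : x - c ≤ 0)]; ring)]
    rw [← intervalIntegral.integral_of_le hc]
    have hF : ∀ x ∈ uIcc (0:ℝ) c, HasDerivAt (fun x => (1*x + (1-c)) * Real.exp (-1*x))
        ((c - x) * Real.exp (-1*x)) x := by
      intro x _
      have h := hasDerivAt_linexp 1 (1-c) (-1) x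
      have e : (1 + -1*(1*x + (1-c)) : ℝ) = c - x := by ring
      rwa [e] at h
    have := intervalIntegral.integral_eq_sub_of_hasDerivAt hF
      (Continuous.intervalIntegrable (by continuity) _ _)
    simp only [neg_one_mul, one_mul] at this
    rw [this]
    norm_num
  have P2 : ∫ x in Ioi c, Real.exp (-x) * |x - c| = Real.exp (-c) := by
    rw [setIntegral_congr_fun measurableSet_Ioi
      (g := fun x => (x - c) * Real.exp (-x))
      (fun x hx => by rw [abs_of_nonneg (by linarith [mem_Ioi.mp hx] : (0:ℝ) ≤ x - c)]; ring)]
    have hF : ∀ x ∈ Ici c, HasDerivAt (fun x => (-1*x + (c-1)) * Real.exp (-1*x))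
        ((x - c) * Real.exp (-1*x)) x := by
      intro x _
      have h := hasDerivAt_linexp (-1) (c-1) (-1) x
      have e : (-1 + -1*(-1*x + (c-1)) : ℝ) = x - c := by ring
      rwa [e] at h
    have htend : Tendsto (fun x : ℝ => (-1*x + (c-1)) * Real.exp (-1*x)) atTop (𝓝 0) := by
      have h1 : Tendsto (fun x : ℝ => x ^ 1 * Real.exp (-x)) atTop (𝓝 0) :=
        tendsto_pow_mul_exp_neg_atTop_nhds_zero 1
      have h2 : Tendsto (fun x : ℝ => Real.exp (-x)) atTop (𝓝 0) := tendsto_exp_neg_atTop_nhds_zero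
      have := h1.neg.add (h2.const_mul (c-1))
      simpa [neg_one_mul] using this.congr (fun x => by ring)
    have hint : IntegrableOn (fun x => (x - c) * Real.exp (-1*x)) (Ioi c) := by
      refine hint2.congr_fun (fun x hx => ?_) measurableSet_Ioi
      show Real.exp (-x) * |x - c| = (x - c) * Real.exp (-1*x)
      rw [abs_of_nonneg (by linarith [mem_Ioi.mp hx] : (0:ℝ) ≤ x - c)]
      simp [neg_one_mul]; ring
    have := integral_Ioi_of_hasDerivAt_of_tendsto' hF hint htend
    simp only [neg_one_mul] at this
    rw [this]
    ring
  rw [P1, P2]; ring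

lemma outer_int (t : ℝ) (ht0 : 0 ≤ t) (ht1 : t ≤ 1) :
    ∫ y in Ioi (0:ℝ), Real.exp (-y) * ((1 - t + t*y) - 1 + 2 * Real.exp (-(1 - t + t*y)))
      = 2 * Real.exp (t - 1) / (1 + t) := by
  have ht : (0:ℝ) < 1 + t := by linarith
  have hne : (1 + t) ≠ 0 := ne_of_gt ht
  have key : ∀ y : ℝ, Real.exp (-y) * ((1 - t + t*y) - 1 + 2 * Real.exp (-(1 - t + t*y)))
      = (t*(y-1)) * Real.exp (-y) + (2*Real.exp (t-1)) * Real.exp (-(1+t)*y) := by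
    intro y
    have h : Real.exp (t-1) * Real.exp (-(1+t)*y) = Real.exp (-(1 - t + t*y)) * Real.exp (-y) := by
      rw [← Real.exp_add, ← Real.exp_add]; ring_nf
    linear_combination (-2) * h
  simp only [key]
  have hF : ∀ y ∈ Ici (0:ℝ), HasDerivAt
      (fun y => (-t*y + 0) * Real.exp (-1*y) + (0*y + (-(2*Real.exp (t-1))/(1+t))) * Real.exp (-(1+t)*y))
      ((t*(y-1)) * Real.exp (-y) + (2*Real.exp (t-1)) * Real.exp (-(1+t)*y)) y := by
    intro y _
    have h1 := hasDerivAt_linexp (-t) 0 (-1) y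
    have h2 := hasDerivAt_linexp 0 (-(2*Real.exp (t-1))/(1+t)) (-(1+t)) y
    have e1 : (-t + -1*(-t*y + 0) : ℝ) = t*(y-1) := by ring
    have e2 : (0 + -(1+t)*(0*y + -(2*Real.exp (t-1))/(1+t)) : ℝ) = 2*Real.exp (t-1) := by
      field_simp
      ring
    rw [e1] at h1
    rw [e2] at h2
    have h := h1.add h2
    exact h.congr_deriv (by simp only [neg_one_mul])
  have hint : IntegrableOn
      (fun y => (t*(y-1)) * Real.exp (-y) + (2*Real.exp (t-1)) * Real.exp (-(1+t)*y)) (Ioi 0) := by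
    have hA : IntegrableOn (fun y : ℝ => (t*(y-1)) * Real.exp (-y)) (Ioi 0) := by
      refine ((int_xexp.sub (int_exp 0)).const_mul t).congr (ae_of_all _ fun y => ?_)
      simp only [Pi.sub_apply]; ring
    have hB : IntegrableOn (fun y : ℝ => (2*Real.exp (t-1)) * Real.exp (-(1+t)*y)) (Ioi 0) := by
      exact (exp_neg_integrableOn_Ioi 0 ht).const_mul (2*Real.exp (t-1))
    exact hA.add hB
  have htend : Tendsto
      (fun y => (-t*y + 0) * Real.exp (-1*y) + (0*y + (-(2*Real.exp (t-1))/(1+t))) * Real.exp (-(1+t)*y))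
      atTop (𝓝 0) := by
    have h1 : Tendsto (fun y : ℝ => y ^ 1 * Real.exp (-y)) atTop (𝓝 0) :=
      tendsto_pow_mul_exp_neg_atTop_nhds_zero 1
    have h2 : Tendsto (fun y : ℝ => Real.exp (-(1+t)*y)) atTop (𝓝 0) := by
      have h := Real.tendsto_exp_neg_atTop_nhds_zero.comp
        (Tendsto.const_mul_atTop ht (tendsto_id (α := ℝ)))
      refine h.congr fun y => ?_
      simp only [Function.comp_apply, id_eq, neg_mul]
    have h := (h1.const_mul (-t)).add (h2.const_mul (-(2*Real.exp (t-1))/(1+t)))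
    simp only [mul_zero, add_zero] at h ⊢
    simpa [neg_one_mul] using h.congr (fun y => by ring)
  have hres := integral_Ioi_of_hasDerivAt_of_tendsto' hF hint htend
  rw [hres]
  simp only [neg_one_mul, mul_zero, zero_mul, zero_add, neg_zero, Real.exp_zero, mul_one]
  field_simp
  ring

lemma expPDF_nonneg (x : ℝ) : 0 ≤ expPDF x := by
  unfold expPDF; split_ifs <;> positivity

lemma measurable_expPDF : Measurable expPDF := by
  unfold expPDF
  exact Measurable.ite measurableSet_Ioi (by fun_prop) measurable_const

lemma integral_expμ (g : ℝ → ℝ) :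
    ∫ x, g x ∂(volume.withDensity fun x => ENNReal.ofReal (expPDF x))
      = ∫ x in Ioi (0:ℝ), Real.exp (-x) * g x := by
  have hm : Measurable (fun x => (expPDF x).toNNReal) := measurable_expPDF.real_toNNReal
  rw [show (fun x => ENNReal.ofReal (expPDF x)) = (fun x => ((expPDF x).toNNReal : ℝ≥0∞)) from rfl,
    integral_withDensity_eq_integral_smul hm]
  rw [← integral_indicator measurableSet_Ioi]
  congr 1
  ext x
  simp only [NNReal.smul_def, Real.coe_toNNReal _ (expPDF_nonneg x)]
  unfold expPDF
  by_cases h : 0 < x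
  · simp [indicator, h]
  · simp [indicator, h]

lemma integrable_absμ : Integrable (fun x : ℝ => |x - 1|)
    (volume.withDensity fun x => ENNReal.ofReal (expPDF x)) := by
  rw [integrable_withDensity_iff measurable_expPDF.ennreal_ofReal
    (ae_of_all _ fun x => ENNReal.ofReal_lt_top)]
  have heq : (fun x : ℝ => |x - 1| * (ENNReal.ofReal (expPDF x)).toReal)
      = Set.indicator (Ioi 0) (fun x => |x - 1| * Real.exp (-x)) := by
    ext x
    rw [ENNReal.toReal_ofReal (expPDF_nonneg x)]
    unfold expPDF
    by_cases h : 0 < x <;> simp [indicator, h]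
  rw [heq, integrable_indicator_iff measurableSet_Ioi]
  refine (int_xexp.add (int_exp 0)).mono' ?_ ?_
  · exact ((continuous_id.sub continuous_const).abs.mul
      (Real.continuous_exp.comp continuous_neg)).aestronglyMeasurable
  · refine (ae_restrict_iff' measurableSet_Ioi).mpr (ae_of_all _ fun x hx => ?_)
    have h0 : (0:ℝ) < x := hx
    have habs : |x - 1| ≤ x + 1 := by
      rw [abs_le]; constructor <;> linarith
    rw [Real.norm_eq_abs, abs_mul, abs_abs, abs_of_pos (Real.exp_pos _)]
    have := mul_le_mul_of_nonneg_right habs (Real.exp_pos (-x)).le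
    simp only [Pi.add_apply]
    nlinarith [Real.exp_pos (-x)]


theorem stmt_8 {Ω : Type} [MeasurableSpace Ω] (P : Measure Ω) [IsProbabilityMeasure P]
    (E E' : Ω → ℝ) (hE : HasDensity P E expPDF) (hE' : HasDensity P E' expPDF)
    (hind : IndepFun E E' P)
    (t : ℝ) (ht0 : 0 ≤ t) (ht1 : t ≤ 1) :
    (∫ ω, |(E ω - 1) - t * (E' ω - 1)| ∂P) = (2 / Real.exp 1) * Real.exp t / (1 + t) := by
  have hPμ : IsProbabilityMeasure (volume.withDensity fun x => ENNReal.ofReal (expPDF x)) := by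
    rw [← hE.2]; exact Measure.isProbabilityMeasure_map hE.1.aemeasurable
  set μ : Measure ℝ := volume.withDensity fun x => ENNReal.ofReal (expPDF x) with hμ
  have hpair : Measurable (fun ω => (E ω, E' ω)) := hE.1.prodMk hE'.1
  have hmap : Measure.map (fun ω => (E ω, E' ω)) P = μ.prod μ := by
    rw [(indepFun_iff_map_prod_eq_prod_map_map hE.1.aemeasurable hE'.1.aemeasurable).mp hind,
      hE.2, hE'.2]
  have hf_cont : Continuous (fun p : ℝ × ℝ => |(p.1 - 1) - t * (p.2 - 1)|) :=
    ((continuous_fst.sub continuous_const).sub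
      (continuous_const.mul (continuous_snd.sub continuous_const))).abs
  have h1 : Integrable (fun x : ℝ => |x - 1|) μ := integrable_absμ
  have h2 : Integrable (fun p : ℝ × ℝ => |p.1 - 1|) (μ.prod μ) := by
    have hm : Measure.map Prod.fst (μ.prod μ) = μ := by
      rw [Measure.map_fst_prod]; simp
    have ha : AEStronglyMeasurable (fun x : ℝ => |x - 1|) (Measure.map Prod.fst (μ.prod μ)) := by
      rw [hm]; exact h1.aestronglyMeasurable
    exact (integrable_map_measure ha measurable_fst.aemeasurable).mp (by rwa [hm])
  have h3 : Integrable (fun p : ℝ × ℝ => |p.2 - 1|) (μ.prod μ) := by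
    have hm : Measure.map Prod.snd (μ.prod μ) = μ := by
      rw [Measure.map_snd_prod]; simp
    have ha : AEStronglyMeasurable (fun x : ℝ => |x - 1|) (Measure.map Prod.snd (μ.prod μ)) := by
      rw [hm]; exact h1.aestronglyMeasurable
    exact (integrable_map_measure ha measurable_snd.aemeasurable).mp (by rwa [hm])
  have hfi : Integrable (fun p : ℝ × ℝ => |(p.1 - 1) - t * (p.2 - 1)|) (μ.prod μ) := by
    refine (h2.add h3).mono' hf_cont.aestronglyMeasurable (ae_of_all _ fun p => ?_)
    rw [Real.norm_eq_abs, abs_abs, sub_eq_add_neg]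
    refine (abs_add_le _ _).trans ?_
    rw [abs_neg, abs_mul, abs_of_nonneg ht0]
    have := abs_nonneg (p.2 - 1)
    simp only [Pi.add_apply]
    nlinarith
  calc ∫ ω, |(E ω - 1) - t * (E' ω - 1)| ∂P
      = ∫ p : ℝ × ℝ, |(p.1 - 1) - t * (p.2 - 1)| ∂(μ.prod μ) := by
        rw [← hmap]
        exact (integral_map hpair.aemeasurable
          (by rw [hmap]; exact hf_cont.aestronglyMeasurable)).symm
    _ = ∫ y, ∫ x, |(x - 1) - t * (y - 1)| ∂μ ∂μ := integral_prod_symm _ hfi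
    _ = ∫ y in Ioi 0, Real.exp (-y) * ∫ x, |(x - 1) - t * (y - 1)| ∂μ :=
        integral_expμ _
    _ = ∫ y in Ioi 0, Real.exp (-y) * ((1 - t + t*y) - 1 + 2 * Real.exp (-(1 - t + t*y))) := by
        refine setIntegral_congr_fun measurableSet_Ioi (fun y hy => ?_)
        have hy0 : (0:ℝ) < y := hy
        have harg : (fun x : ℝ => Real.exp (-x) * |(x - 1) - t * (y - 1)|)
            = (fun x : ℝ => Real.exp (-x) * |x - (1 - t + t*y)|) := by
          funext x
          congr 2
          ring
        rw [hμ] at *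
        congr 1
        rw [integral_expμ, harg, inner_int _ (by nlinarith)]
    _ = 2 * Real.exp (t - 1) / (1 + t) := outer_int t ht0 ht1
    _ = 2 / Real.exp 1 * Real.exp t / (1 + t) := by
        rw [Real.exp_sub]; ring
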